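/- For any β ≥ 0, r ≥ 1, and initial state x₀ = (x₀₁, x₀₂) with positive integer entries, the intensity satisfies N(β, r, x₀) ⪯ N(0, r, x₀); i.e., for every integer n, P[N(β,r,x₀) ≥ n] ≤ P[N(0,r,x₀) ≥ n]. -/

import Mathlib

set_option linter.unusedSectionVars false
set_option linter.unusedVariables false


open MeasureTheory Filter

noncomputable section

/-- Transition probability of the nonlinear Pólya urn with feedback strength `β` and
fitness ratio `r`: from `(x₁,x₂)` move to `(x₁+1,x₂)` with probability
`r·x₁^β/(r·x₁^β + x₂^β)`, to `(x₁,x₂+1)` with probability `x₂^β/(r·x₁^β + x₂^β)`,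
and nowhere else. -/
def urnStep (β r : ℝ) (x y : ℕ × ℕ) : ℝ :=
  if y = (x.1 + 1, x.2) then r * (x.1 : ℝ) ^ β / (r * (x.1 : ℝ) ^ β + (x.2 : ℝ) ^ β)
  else if y = (x.1, x.2 + 1) then (x.2 : ℝ) ^ β / (r * (x.1 : ℝ) ^ β + (x.2 : ℝ) ^ β)
  else 0

/-- `μ` is the law (on trajectories `ℕ → ℕ × ℕ`) of a `(β,r,x₀)`-urn process:
a probability measure under which each finite initial trajectory starting at `x₀`
has probability equal to the product of the one-step urn transition probabilities. -/
def IsUrnProcess (μ : Measure (ℕ → ℕ × ℕ)) (β r : ℝ) (x₀ : ℕ × ℕ) : Prop :=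
  IsProbabilityMeasure μ ∧
  ∀ (n : ℕ) (path : ℕ → ℕ × ℕ), path 0 = x₀ →
    (μ {ω | ∀ t ≤ n, ω t = path t}).toReal
      = ∏ t ∈ Finset.range n, urnStep β r (path t) (path (t + 1))

/-- `N_t`: the number of ties up to (and including) time `t`. -/
def numTiesUpTo (ω : ℕ → ℕ × ℕ) (t : ℕ) : ℕ :=
  ((Finset.range (t + 1)).filter (fun j => (ω j).1 = (ω j).2)).card

/-- The intensity `N`: the total number of ties (possibly `∞`). -/
def intensity (ω : ℕ → ℕ × ℕ) : ℕ∞ :=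
  {t : ℕ | (ω t).1 = (ω t).2}.encard

/-- `T_n` (for `n ≥ 1`): the time of the `n`-th tie, i.e. the (unique, if it exists) time `s`
at which a tie occurs and the number of ties up to `s` equals `n`; `⊤` if there is no such time. -/
def nthTieTime (n : ℕ) (ω : ℕ → ℕ × ℕ) : ℕ∞ :=
  sInf {t : ℕ∞ | ∃ s : ℕ, t = (s : ℕ∞) ∧ (ω s).1 = (ω s).2 ∧ numTiesUpTo ω s = n}

/-- The event `{T ≥ t}` where `T` is the duration (time of the last tie, with the convention
`T = -1` if there is no tie): for `t : ℕ` this event is exactly `{∃ s ≥ t, a tie occurs at s}`. -/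
def durationTail (t : ℕ) : Set (ℕ → ℕ × ℕ) :=
  {ω | ∃ s, t ≤ s ∧ (ω s).1 = (ω s).2}

namespace UrnAux

def up (x : ℕ × ℕ) : ℕ × ℕ := (x.1 + 1, x.2)
def rt (x : ℕ × ℕ) : ℕ × ℕ := (x.1, x.2 + 1)
def Pos (x : ℕ × ℕ) : Prop := 0 < x.1 ∧ 0 < x.2

lemma Pos.up {x : ℕ × ℕ} (h : Pos x) : Pos (up x) := ⟨Nat.succ_pos _, h.2⟩
lemma Pos.rt {x : ℕ × ℕ} (h : Pos x) : Pos (rt x) := ⟨h.1, Nat.succ_pos _⟩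

lemma up_ne_rt (x : ℕ × ℕ) : up x ≠ rt x := by
  simp [up, rt, Prod.ext_iff]

variable {β r : ℝ}

lemma urnStep_up (x : ℕ × ℕ) :
    urnStep β r x (up x) = r * (x.1 : ℝ) ^ β / (r * (x.1 : ℝ) ^ β + (x.2 : ℝ) ^ β) := by
  simp [urnStep, up]

lemma urnStep_rt (x : ℕ × ℕ) :
    urnStep β r x (rt x) = (x.2 : ℝ) ^ β / (r * (x.1 : ℝ) ^ β + (x.2 : ℝ) ^ β) := by
  have h : rt x ≠ (x.1 + 1, x.2) := by simp [rt, Prod.ext_iff]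
  simp [urnStep, rt, h]

lemma urnStep_eq_zero {x y : ℕ × ℕ} (h1 : y ≠ up x) (h2 : y ≠ rt x) :
    urnStep β r x y = 0 := by
  simp only [up] at h1; simp only [rt] at h2
  simp [urnStep, h1, h2]

lemma urnStep_nonneg (hr : 1 ≤ r) (x y : ℕ × ℕ) : 0 ≤ urnStep β r x y := by
  have h0 : (0:ℝ) < r := lt_of_lt_of_le one_pos hr
  unfold urnStep
  split_ifs with h1 h2
  · apply div_nonneg
    · positivity
    · positivity
  · apply div_nonneg
    · positivity
    · positivity
  · exact le_refl 0

section kernel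
variable (hβ : 0 ≤ β) (hr : 1 ≤ r)
include hβ hr

lemma den_pos {x : ℕ × ℕ} (hx : Pos x) :
    0 < r * (x.1 : ℝ) ^ β + (x.2 : ℝ) ^ β := by
  have h0 : (0:ℝ) < r := lt_of_lt_of_le one_pos hr
  have h1 : (0:ℝ) < (x.1 : ℝ) := by exact_mod_cast hx.1
  have h2 : (0:ℝ) < (x.2 : ℝ) := by exact_mod_cast hx.2
  have := Real.rpow_pos_of_pos h1 β
  have := Real.rpow_pos_of_pos h2 β
  positivity

lemma urnStep_add {x : ℕ × ℕ} (hx : Pos x) :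
    urnStep β r x (up x) + urnStep β r x (rt x) = 1 := by
  rw [urnStep_up, urnStep_rt, ← add_div, div_self (ne_of_gt (den_pos hβ hr hx))]

lemma urnStep_diag_up {x : ℕ × ℕ} (hx : Pos x) (hd : x.1 = x.2) :
    urnStep β r x (up x) = r / (1 + r) := by
  have h1 : (0:ℝ) < (x.1 : ℝ) := by exact_mod_cast hx.1
  have hp := Real.rpow_pos_of_pos h1 β
  rw [urnStep_up, ← hd]
  rw [div_eq_div_iff (by nlinarith [lt_of_lt_of_le one_pos hr]) (by nlinarith [lt_of_lt_of_le one_pos hr])]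
  ring

lemma urnStep_diag_rt {x : ℕ × ℕ} (hx : Pos x) (hd : x.1 = x.2) :
    urnStep β r x (rt x) = 1 / (1 + r) := by
  have h2 : (0:ℝ) < (x.2 : ℝ) := by exact_mod_cast hx.2
  have hp := Real.rpow_pos_of_pos h2 β
  rw [urnStep_rt, hd]
  rw [div_eq_div_iff (by nlinarith [lt_of_lt_of_le one_pos hr]) (by nlinarith [lt_of_lt_of_le one_pos hr])]
  ring

/-- when `X₁` leads, the step toward the diagonal has probability at most `1/(1+r)` -/
lemma urnStep_toward_rt {x : ℕ × ℕ} (hx : Pos x) (hlt : x.2 < x.1) :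
    urnStep β r x (rt x) ≤ 1 / (1 + r) := by
  have h0 : (0:ℝ) < r := lt_of_lt_of_le one_pos hr
  have h2 : (0:ℝ) < (x.2 : ℝ) := by exact_mod_cast hx.2
  have hle : ((x.2 : ℝ)) ^ β ≤ ((x.1 : ℝ)) ^ β := by
    apply Real.rpow_le_rpow (le_of_lt h2) (by exact_mod_cast le_of_lt hlt) hβ
  have hp2 := Real.rpow_pos_of_pos h2 β
  rw [urnStep_rt]
  rw [div_le_div_iff₀ (den_pos hβ hr hx) (by nlinarith)]
  nlinarith

/-- when `X₂` leads, the step toward the diagonal has probability at most `r/(1+r)` -/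
lemma urnStep_toward_up {x : ℕ × ℕ} (hx : Pos x) (hlt : x.1 < x.2) :
    urnStep β r x (up x) ≤ r / (1 + r) := by
  have h0 : (0:ℝ) < r := lt_of_lt_of_le one_pos hr
  have h1 : (0:ℝ) < (x.1 : ℝ) := by exact_mod_cast hx.1
  have hle : ((x.1 : ℝ)) ^ β ≤ ((x.2 : ℝ)) ^ β := by
    apply Real.rpow_le_rpow (le_of_lt h1) (by exact_mod_cast le_of_lt hlt) hβ
  have hp1 := Real.rpow_pos_of_pos h1 β
  rw [urnStep_up]
  rw [div_le_div_iff₀ (den_pos hβ hr hx) (by nlinarith)]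
  nlinarith

end kernel

lemma urnStep_zero_up (hr : 1 ≤ r) (x : ℕ × ℕ) :
    urnStep 0 r x (up x) = r / (1 + r) := by
  rw [urnStep_up]
  simp [Real.rpow_zero]
  ring_nf

lemma urnStep_zero_rt (hr : 1 ≤ r) (x : ℕ × ℕ) :
    urnStep 0 r x (rt x) = 1 / (1 + r) := by
  rw [urnStep_rt]
  simp [Real.rpow_zero]
  rw [add_comm]

end UrnAux

namespace UrnAux

/-- tie indicator -/
def dInd (x : ℕ × ℕ) : ℕ := if x.1 = x.2 then 1 else 0

/-- `Q β r t n x` : probability of at least `n` ties during times `0,…,t` starting from `x`. -/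
def Q (β r : ℝ) : ℕ → ℕ → ℕ × ℕ → ℝ
  | 0, n, x => if n ≤ dInd x then 1 else 0
  | t + 1, n, x =>
      urnStep β r x (up x) * Q β r t (n - dInd x) (up x) +
      urnStep β r x (rt x) * Q β r t (n - dInd x) (rt x)

/-- `gW p t d` : probability that a walk on ℕ which moves down (toward `0`) with
probability `p` and up with probability `1-p` reaches `0` within `t` steps from `d`. -/
def gW (p : ℝ) : ℕ → ℕ → ℝ
  | 0, 0 => 1
  | 0, _ + 1 => 0
  | _ + 1, 0 => 1
  | t + 1, d + 1 => p * gW p t d + (1 - p) * gW p t (d + 2)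

variable {β r : ℝ}

lemma gW_succ (p : ℝ) (t d : ℕ) :
    gW p (t + 1) (d + 1) = p * gW p t d + (1 - p) * gW p t (d + 2) := rfl

section gw
variable {p : ℝ} (hp0 : 0 ≤ p) (hp1 : p ≤ 1)
include hp0 hp1

lemma gW_nonneg : ∀ t d, 0 ≤ gW p t d := by
  intro t
  induction t with
  | zero => intro d; cases d <;> simp [gW]
  | succ t ih =>
      intro d
      cases d with
      | zero => simp [gW]
      | succ d =>
          have h1 := ih d
          have h2 := ih (d + 2)
          simp only [gW]
          nlinarith

lemma gW_le_one : ∀ t d, gW p t d ≤ 1 := by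
  intro t
  induction t with
  | zero => intro d; cases d <;> simp [gW]
  | succ t ih =>
      intro d
      cases d with
      | zero => simp [gW]
      | succ d =>
          have h1 := ih d
          have h2 := ih (d + 2)
          simp only [gW]
          nlinarith

lemma gW_zero_d (t : ℕ) : gW p t 0 = 1 := by cases t <;> simp [gW]

lemma gW_anti : ∀ t d, gW p t (d + 1) ≤ gW p t d := by
  intro t
  induction t with
  | zero => intro d; cases d <;> simp [gW]
  | succ t ih =>
      intro d
      cases d with
      | zero =>
          rw [gW_zero_d hp0 hp1]
          have h1 := gW_le_one hp0 hp1 t 0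
          have h2 := gW_le_one hp0 hp1 t 2
          simp only [gW]
          nlinarith
      | succ d =>
          have h1 := ih d
          have h2 := ih (d + 2)
          simp only [gW]
          nlinarith

lemma gW_mono_t : ∀ t d, gW p t d ≤ gW p (t + 1) d := by
  intro t
  induction t with
  | zero =>
      intro d
      cases d with
      | zero => simp [gW]
      | succ d =>
          have := gW_nonneg hp0 hp1 1 (d+1)
          simpa [gW] using this
  | succ t ih =>
      intro d
      cases d with
      | zero => simp [gW]
      | succ d =>
          have h1 := ih d
          have h2 := ih (d + 2)
          rw [gW_succ, gW_succ]
          nlinarith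

end gw

/-- short names for the two one-step probabilities of the feedback-free walk -/
def aa (r : ℝ) : ℝ := 1 / (1 + r)
def bb (r : ℝ) : ℝ := r / (1 + r)

section abr
variable (hr : 1 ≤ r)
include hr

lemma aa_nonneg : 0 ≤ aa r := by
  have : (0:ℝ) < 1 + r := by linarith
  exact div_nonneg zero_le_one this.le

lemma bb_nonneg : 0 ≤ bb r := by
  have h1 : (0:ℝ) < 1 + r := by linarith
  have h2 : (0:ℝ) ≤ r := by linarith
  exact div_nonneg h2 h1.le

lemma aa_add_bb : aa r + bb r = 1 := by
  have : (1 + r) ≠ 0 := by positivity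
  rw [aa, bb, ← add_div, div_self this]

lemma aa_le_one : aa r ≤ 1 := by nlinarith [aa_add_bb hr, bb_nonneg hr]
lemma bb_le_one : bb r ≤ 1 := by nlinarith [aa_add_bb hr, aa_nonneg hr]

/-- `FF r t` : probability that the feedback-free walk, started on the diagonal,
returns to the diagonal within `t` further steps after its first (forced) departure. -/
def FF (r : ℝ) (t : ℕ) : ℝ := bb r * gW (aa r) t 1 + aa r * gW (bb r) t 1

lemma FF_nonneg (t : ℕ) : 0 ≤ FF r t := by
  have := gW_nonneg (aa_nonneg hr) (aa_le_one hr) t 1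
  have := gW_nonneg (bb_nonneg hr) (bb_le_one hr) t 1
  have := aa_nonneg hr
  have := bb_nonneg hr
  unfold FF; positivity

lemma FF_le_one (t : ℕ) : FF r t ≤ 1 := by
  have h1 := gW_le_one (aa_nonneg hr) (aa_le_one hr) t 1
  have h2 := gW_le_one (bb_nonneg hr) (bb_le_one hr) t 1
  have h3 := aa_nonneg hr
  have h4 := bb_nonneg hr
  have h5 := aa_add_bb hr
  unfold FF
  nlinarith [gW_nonneg (aa_nonneg hr) (aa_le_one hr) t 1,
    gW_nonneg (bb_nonneg hr) (bb_le_one hr) t 1]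

end abr

end UrnAux

namespace UrnAux

variable {β r : ℝ}

lemma Q_succ (β r : ℝ) (t n : ℕ) (x : ℕ × ℕ) :
    Q β r (t + 1) n x =
      urnStep β r x (up x) * Q β r t (n - dInd x) (up x) +
      urnStep β r x (rt x) * Q β r t (n - dInd x) (rt x) := rfl

lemma Q_zero_horizon (β r : ℝ) (n : ℕ) (x : ℕ × ℕ) :
    Q β r 0 n x = if n ≤ dInd x then 1 else 0 := rfl

lemma dInd_diag {x : ℕ × ℕ} (h : x.1 = x.2) : dInd x = 1 := by simp [dInd, h]
lemma dInd_ne {x : ℕ × ℕ} (h : x.1 ≠ x.2) : dInd x = 0 := by simp [dInd, h]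

section qbasic
variable (hr : 1 ≤ r)
include hr

lemma Q_nonneg : ∀ t n x, 0 ≤ Q β r t n x := by
  intro t
  induction t with
  | zero => intro n x; rw [Q_zero_horizon]; split_ifs <;> norm_num
  | succ t ih =>
      intro n x
      rw [Q_succ]
      have := urnStep_nonneg (β := β) hr x (up x)
      have := urnStep_nonneg (β := β) hr x (rt x)
      have := ih (n - dInd x) (up x)
      have := ih (n - dInd x) (rt x)
      positivity

end qbasic

section qpos
variable (hβ : 0 ≤ β) (hr : 1 ≤ r)
include hβ hr

lemma Q_le_one : ∀ t n x, Pos x → Q β r t n x ≤ 1 := by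
  intro t
  induction t with
  | zero => intro n x _; rw [Q_zero_horizon]; split_ifs <;> norm_num
  | succ t ih =>
      intro n x hx
      rw [Q_succ]
      have h1 := urnStep_nonneg (β := β) hr x (up x)
      have h2 := urnStep_nonneg (β := β) hr x (rt x)
      have h3 := ih (n - dInd x) (up x) hx.up
      have h4 := ih (n - dInd x) (rt x) hx.rt
      have h5 := urnStep_add hβ hr hx
      have h6 := Q_nonneg (β := β) hr t (n - dInd x) (up x)
      have h7 := Q_nonneg (β := β) hr t (n - dInd x) (rt x)
      nlinarith

lemma Q_zero_n : ∀ t x, Pos x → Q β r t 0 x = 1 := by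
  intro t
  induction t with
  | zero => intro x _; rw [Q_zero_horizon]; simp
  | succ t ih =>
      intro x hx
      rw [Q_succ]
      simp only [Nat.zero_sub]
      rw [ih (up x) hx.up, ih (rt x) hx.rt]
      have := urnStep_add hβ hr hx
      linarith

lemma Q_diag_one (t : ℕ) {x : ℕ × ℕ} (hx : Pos x) (hd : x.1 = x.2) :
    Q β r t 1 x = 1 := by
  cases t with
  | zero => rw [Q_zero_horizon, dInd_diag hd]; simp
  | succ t =>
      rw [Q_succ, dInd_diag hd]
      simp only [Nat.sub_self]
      rw [Q_zero_n hβ hr t (up x) hx.up, Q_zero_n hβ hr t (rt x) hx.rt]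
      have := urnStep_add hβ hr hx
      linarith

lemma Q_mono_t : ∀ t n x, Pos x → Q β r t n x ≤ Q β r (t + 1) n x := by
  intro t
  induction t with
  | zero =>
      intro n x hx
      rw [Q_zero_horizon]
      split_ifs with h
      · have hz : n - dInd x = 0 := by omega
        rw [Q_succ, hz, Q_zero_n hβ hr 0 (up x) hx.up, Q_zero_n hβ hr 0 (rt x) hx.rt]
        have := urnStep_add hβ hr hx
        linarith
      · exact Q_nonneg hr 1 n x
  | succ t ih =>
      intro n x hx
      rw [Q_succ, Q_succ]
      have h1 := urnStep_nonneg (β := β) hr x (up x)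
      have h2 := urnStep_nonneg (β := β) hr x (rt x)
      have h3 := ih (n - dInd x) (up x) hx.up
      have h4 := ih (n - dInd x) (rt x) hx.rt
      nlinarith

lemma Q_mono_t' (s : ℕ) : ∀ t n x, Pos x → Q β r t n x ≤ Q β r (t + s) n x := by
  induction s with
  | zero => intro t n x _; exact le_refl _
  | succ s ih =>
      intro t n x hx
      calc Q β r t n x ≤ Q β r (t + s) n x := ih t n x hx
        _ ≤ Q β r (t + s + 1) n x := Q_mono_t hβ hr (t + s) n x hx

end qpos

/-- the dominating first-hitting value -/
def GG (r : ℝ) (t : ℕ) (x : ℕ × ℕ) : ℝ :=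
  if x.1 = x.2 then 1
  else if x.2 < x.1 then gW (aa r) t (x.1 - x.2) else gW (bb r) t (x.2 - x.1)

lemma GG_diag {t : ℕ} {x : ℕ × ℕ} (h : x.1 = x.2) : GG r t x = 1 := by simp [GG, h]
lemma GG_left {t : ℕ} {x : ℕ × ℕ} (h : x.2 < x.1) : GG r t x = gW (aa r) t (x.1 - x.2) := by
  have : x.1 ≠ x.2 := by omega
  simp [GG, this, h]
lemma GG_right {t : ℕ} {x : ℕ × ℕ} (h : x.1 < x.2) : GG r t x = gW (bb r) t (x.2 - x.1) := by
  have h1 : x.1 ≠ x.2 := by omega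
  have h2 : ¬ x.2 < x.1 := by omega
  simp [GG, h1, h2]

section firsthit
variable (hβ : 0 ≤ β) (hr : 1 ≤ r)
include hβ hr

/-- comparison of first-hitting probabilities with the dominating walk -/
lemma Q_le_GG : ∀ t x, Pos x → Q β r t 1 x ≤ GG r t x := by
  have ha0 := aa_nonneg hr
  have ha1 := aa_le_one hr
  have hb0 := bb_nonneg hr
  have hb1 := bb_le_one hr
  have hab := aa_add_bb hr
  intro t
  induction t with
  | zero =>
      intro x hx
      rw [Q_zero_horizon]
      by_cases hd : x.1 = x.2
      · rw [GG_diag hd, dInd_diag hd]; simp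
      · rw [dInd_ne hd]
        simp only [show ¬ (1 ≤ 0) by omega, if_false]
        rcases lt_or_gt_of_ne hd with h | h
        · rw [GG_right h]; exact gW_nonneg hb0 hb1 0 _
        · rw [GG_left h]; exact gW_nonneg ha0 ha1 0 _
  | succ t ih =>
      intro x hx
      by_cases hd : x.1 = x.2
      · rw [GG_diag hd, Q_diag_one hβ hr _ hx hd]
      · rw [Q_succ, dInd_ne hd]
        simp only [Nat.sub_zero]
        have h1 := urnStep_nonneg (β := β) hr x (up x)
        have h2 := urnStep_nonneg (β := β) hr x (rt x)
        have hsum := urnStep_add hβ hr hx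
        rcases lt_or_gt_of_ne hd with hlt | hgt
        · -- x.1 < x.2 : X₂ leads, toward step is `up`, prob ≤ bb
          obtain ⟨d, hdeq⟩ : ∃ d, x.2 = x.1 + (d + 1) := ⟨x.2 - x.1 - 1, by omega⟩
          have hup : Q β r t 1 (up x) ≤ gW (bb r) t d := by
            rcases Nat.eq_zero_or_pos d with hd0 | hd0
            · have hdg : (up x).1 = (up x).2 := by simp [up]; omega
              rw [Q_diag_one hβ hr _ hx.up hdg, hd0, gW_zero_d hb0 hb1]
            · have hlt' : (up x).1 < (up x).2 := by simp [up]; omega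
              have := ih (up x) hx.up
              rwa [GG_right hlt', show (up x).2 - (up x).1 = d by simp [up]; omega] at this
          have hrt : Q β r t 1 (rt x) ≤ gW (bb r) t (d + 2) := by
            have hlt' : (rt x).1 < (rt x).2 := by simp [rt]; omega
            have := ih (rt x) hx.rt
            rwa [GG_right hlt', show (rt x).2 - (rt x).1 = d + 2 by simp [rt]; omega] at this
          rw [GG_right hlt, show x.2 - x.1 = d + 1 by omega, gW_succ]
          have htow := urnStep_toward_up hβ hr hx hlt
          have hmono : gW (bb r) t (d + 2) ≤ gW (bb r) t d := by
            calc gW (bb r) t (d + 2) ≤ gW (bb r) t (d + 1) := gW_anti hb0 hb1 t (d+1)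
              _ ≤ gW (bb r) t d := gW_anti hb0 hb1 t d
          have hq1 := Q_nonneg (β := β) hr t 1 (up x)
          have hq2 := Q_nonneg (β := β) hr t 1 (rt x)
          have hg1 := gW_nonneg hb0 hb1 t d
          have hg2 := gW_nonneg hb0 hb1 t (d + 2)
          have htow' : urnStep β r x (up x) ≤ bb r := by rw [bb]; exact htow
          nlinarith [mul_le_mul_of_nonneg_left hup h1, mul_le_mul_of_nonneg_left hrt h2,
            mul_le_mul_of_nonneg_right htow' (sub_nonneg.2 hmono)]
        · -- x.2 < x.1 : X₁ leads, toward step is `rt`, prob ≤ aa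
          obtain ⟨d, hdeq⟩ : ∃ d, x.1 = x.2 + (d + 1) := ⟨x.1 - x.2 - 1, by omega⟩
          have hrt : Q β r t 1 (rt x) ≤ gW (aa r) t d := by
            rcases Nat.eq_zero_or_pos d with hd0 | hd0
            · have hdg : (rt x).1 = (rt x).2 := by simp [rt]; omega
              rw [Q_diag_one hβ hr _ hx.rt hdg, hd0, gW_zero_d ha0 ha1]
            · have hlt' : (rt x).2 < (rt x).1 := by simp [rt]; omega
              have := ih (rt x) hx.rt
              rwa [GG_left hlt', show (rt x).1 - (rt x).2 = d by simp [rt]; omega] at this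
          have hup : Q β r t 1 (up x) ≤ gW (aa r) t (d + 2) := by
            have hlt' : (up x).2 < (up x).1 := by simp [up]; omega
            have := ih (up x) hx.up
            rwa [GG_left hlt', show (up x).1 - (up x).2 = d + 2 by simp [up]; omega] at this
          rw [GG_left hgt, show x.1 - x.2 = d + 1 by omega, gW_succ]
          have htow := urnStep_toward_rt hβ hr hx hgt
          have hmono : gW (aa r) t (d + 2) ≤ gW (aa r) t d := by
            calc gW (aa r) t (d + 2) ≤ gW (aa r) t (d + 1) := gW_anti ha0 ha1 t (d+1)
              _ ≤ gW (aa r) t d := gW_anti ha0 ha1 t d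
          have hq1 := Q_nonneg (β := β) hr t 1 (up x)
          have hq2 := Q_nonneg (β := β) hr t 1 (rt x)
          have hg1 := gW_nonneg ha0 ha1 t d
          have hg2 := gW_nonneg ha0 ha1 t (d + 2)
          have htow' : urnStep β r x (rt x) ≤ aa r := by rw [aa]; exact htow
          nlinarith [mul_le_mul_of_nonneg_left hrt h2, mul_le_mul_of_nonneg_left hup h1,
            mul_le_mul_of_nonneg_right htow' (sub_nonneg.2 hmono)]

end firsthit

section firsthit0
variable (hr : 1 ≤ r)
include hr

lemma one_sub_aa : 1 - aa r = bb r := by have := aa_add_bb hr; linarith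
lemma one_sub_bb : 1 - bb r = aa r := by have := aa_add_bb hr; linarith

/-- for the feedback-free walk the first-hitting probability is exactly `GG` -/
lemma Q0_eq_GG : ∀ t x, Pos x → Q 0 r t 1 x = GG r t x := by
  have ha0 := aa_nonneg hr
  have ha1 := aa_le_one hr
  have hb0 := bb_nonneg hr
  have hb1 := bb_le_one hr
  intro t
  induction t with
  | zero =>
      intro x hx
      rw [Q_zero_horizon]
      by_cases hd : x.1 = x.2
      · rw [GG_diag hd, dInd_diag hd]; simp
      · rw [dInd_ne hd]
        simp only [show ¬ (1 ≤ 0) by omega, if_false]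
        rcases lt_or_gt_of_ne hd with h | h
        · rw [GG_right h, show x.2 - x.1 = (x.2 - x.1 - 1) + 1 by omega]; rfl
        · rw [GG_left h, show x.1 - x.2 = (x.1 - x.2 - 1) + 1 by omega]; rfl
  | succ t ih =>
      intro x hx
      by_cases hd : x.1 = x.2
      · rw [GG_diag hd, Q_diag_one (le_refl 0) hr _ hx hd]
      · rw [Q_succ, dInd_ne hd]
        simp only [Nat.sub_zero]
        rw [urnStep_zero_up hr, urnStep_zero_rt hr]
        rcases lt_or_gt_of_ne hd with hlt | hgt
        · obtain ⟨d, hdeq⟩ : ∃ d, x.2 = x.1 + (d + 1) := ⟨x.2 - x.1 - 1, by omega⟩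
          have hup : Q 0 r t 1 (up x) = gW (bb r) t d := by
            rcases Nat.eq_zero_or_pos d with hd0 | hd0
            · have hdg : (up x).1 = (up x).2 := by simp [up]; omega
              rw [Q_diag_one (le_refl 0) hr _ hx.up hdg, hd0, gW_zero_d hb0 hb1]
            · have hlt' : (up x).1 < (up x).2 := by simp [up]; omega
              rw [ih (up x) hx.up, GG_right hlt',
                show (up x).2 - (up x).1 = d by simp [up]; omega]
          have hrt : Q 0 r t 1 (rt x) = gW (bb r) t (d + 2) := by
            have hlt' : (rt x).1 < (rt x).2 := by simp [rt]; omega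
            rw [ih (rt x) hx.rt, GG_right hlt',
              show (rt x).2 - (rt x).1 = d + 2 by simp [rt]; omega]
          rw [GG_right hlt, show x.2 - x.1 = d + 1 by omega, gW_succ, hup, hrt,
            one_sub_bb hr]
          simp only [aa, bb]; try ring
        · obtain ⟨d, hdeq⟩ : ∃ d, x.1 = x.2 + (d + 1) := ⟨x.1 - x.2 - 1, by omega⟩
          have hrt : Q 0 r t 1 (rt x) = gW (aa r) t d := by
            rcases Nat.eq_zero_or_pos d with hd0 | hd0
            · have hdg : (rt x).1 = (rt x).2 := by simp [rt]; omega
              rw [Q_diag_one (le_refl 0) hr _ hx.rt hdg, hd0, gW_zero_d ha0 ha1]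
            · have hlt' : (rt x).2 < (rt x).1 := by simp [rt]; omega
              rw [ih (rt x) hx.rt, GG_left hlt',
                show (rt x).1 - (rt x).2 = d by simp [rt]; omega]
          have hup : Q 0 r t 1 (up x) = gW (aa r) t (d + 2) := by
            have hlt' : (up x).2 < (up x).1 := by simp [up]; omega
            rw [ih (up x) hx.up, GG_left hlt',
              show (up x).1 - (up x).2 = d + 2 by simp [up]; omega]
          rw [GG_left hgt, show x.1 - x.2 = d + 1 by omega, gW_succ, hup, hrt,
            one_sub_aa hr]
          simp only [aa, bb]; try ring

end firsthit0

end UrnAux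

namespace UrnAux

variable {β r : ℝ}

section ffm
variable (hr : 1 ≤ r)
include hr

lemma FF_mono (t : ℕ) : FF r t ≤ FF r (t + 1) := by
  have h1 := gW_mono_t (aa_nonneg hr) (aa_le_one hr) t 1
  have h2 := gW_mono_t (bb_nonneg hr) (bb_le_one hr) t 1
  have := aa_nonneg hr
  have := bb_nonneg hr
  unfold FF
  nlinarith

end ffm

section chain
variable (hβ : 0 ≤ β) (hr : 1 ≤ r)
include hβ hr

/-- from a diagonal state, the probability of returning to the diagonal within `t`
further steps is at most `FF r t`. -/
lemma return_bound {t : ℕ} {x : ℕ × ℕ} (hx : Pos x) (hd : x.1 = x.2) :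
    urnStep β r x (up x) * Q β r t 1 (up x) + urnStep β r x (rt x) * Q β r t 1 (rt x)
      ≤ FF r t := by
  rw [urnStep_diag_up hβ hr hx hd, urnStep_diag_rt hβ hr hx hd]
  have hu : Q β r t 1 (up x) ≤ gW (aa r) t 1 := by
    have hlt : (up x).2 < (up x).1 := by simp [up]; omega
    have := Q_le_GG hβ hr t (up x) hx.up
    rwa [GG_left hlt, show (up x).1 - (up x).2 = 1 by simp [up]; omega] at this
  have hv : Q β r t 1 (rt x) ≤ gW (bb r) t 1 := by
    have hlt : (rt x).1 < (rt x).2 := by simp [rt]; omega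
    have := Q_le_GG hβ hr t (rt x) hx.rt
    rwa [GG_right hlt, show (rt x).2 - (rt x).1 = 1 by simp [rt]; omega] at this
  have h1 : (0:ℝ) ≤ r / (1 + r) := bb_nonneg hr
  have h2 : (0:ℝ) ≤ 1 / (1 + r) := aa_nonneg hr
  have e1 : r / (1 + r) = bb r := rfl
  have e2 : (1:ℝ) / (1 + r) = aa r := rfl
  rw [e1, e2]
  unfold FF
  nlinarith [bb_nonneg hr, aa_nonneg hr]

/-- renewal upper bound: at least `n+1` ties is at most `FF^n` times at least one tie. -/
lemma Q_renewal_upper : ∀ t n x, Pos x → Q β r t (n + 1) x ≤ FF r t ^ n * Q β r t 1 x := by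
  intro t
  induction t with
  | zero =>
      intro n x hx
      rw [Q_zero_horizon]
      split_ifs with h
      · have hd : x.1 = x.2 ∧ n = 0 := by
          constructor
          · by_contra hc; rw [dInd_ne hc] at h; omega
          · unfold dInd at h; split_ifs at h <;> omega
        rw [hd.2, pow_zero, one_mul, Q_diag_one hβ hr 0 hx hd.1]
      · have := Q_nonneg (β := β) hr 0 1 x
        have := FF_nonneg hr 0
        positivity
  | succ t ih =>
      intro n x hx
      have h1 := urnStep_nonneg (β := β) hr x (up x)
      have h2 := urnStep_nonneg (β := β) hr x (rt x)
      have hFt := FF_nonneg hr t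
      have hFt1 := FF_nonneg hr (t + 1)
      have hFmono := FF_mono hr t
      by_cases hd : x.1 = x.2
      · rw [Q_succ, dInd_diag hd]
        cases n with
        | zero =>
            rw [pow_zero, one_mul, Q_diag_one hβ hr (t+1) hx hd]
            simp only [Nat.add_sub_cancel]
            rw [Q_zero_n hβ hr t (up x) hx.up, Q_zero_n hβ hr t (rt x) hx.rt,
              mul_one, mul_one]
            have := urnStep_add hβ hr hx
            linarith
        | succ m =>
            simp only [Nat.add_sub_cancel]
            have iu := ih m (up x) hx.up
            have iv := ih m (rt x) hx.rt
            have hret := return_bound hβ hr (t := t) hx hd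
            have hq1 := Q_nonneg (β := β) hr t 1 (up x)
            have hq2 := Q_nonneg (β := β) hr t 1 (rt x)
            have hFm : (0:ℝ) ≤ FF r t ^ m := pow_nonneg hFt m
            have key : urnStep β r x (up x) * Q β r t (m + 1) (up x) +
                urnStep β r x (rt x) * Q β r t (m + 1) (rt x) ≤ FF r t ^ (m + 1) := by
              calc urnStep β r x (up x) * Q β r t (m + 1) (up x) +
                  urnStep β r x (rt x) * Q β r t (m + 1) (rt x)
                  ≤ urnStep β r x (up x) * (FF r t ^ m * Q β r t 1 (up x)) +
                    urnStep β r x (rt x) * (FF r t ^ m * Q β r t 1 (rt x)) := by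
                    have := mul_le_mul_of_nonneg_left iu h1
                    have := mul_le_mul_of_nonneg_left iv h2
                    linarith
                _ = FF r t ^ m * (urnStep β r x (up x) * Q β r t 1 (up x) +
                    urnStep β r x (rt x) * Q β r t 1 (rt x)) := by ring
                _ ≤ FF r t ^ m * FF r t := mul_le_mul_of_nonneg_left hret hFm
                _ = FF r t ^ (m + 1) := by ring
            calc urnStep β r x (up x) * Q β r t (m + 1) (up x) +
                urnStep β r x (rt x) * Q β r t (m + 1) (rt x)
                ≤ FF r t ^ (m + 1) := key
              _ ≤ FF r (t + 1) ^ (m + 1) := pow_le_pow_left₀ hFt hFmono (m + 1)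
              _ = FF r (t + 1) ^ (m + 1) * Q β r (t+1) 1 x := by
                  rw [Q_diag_one hβ hr (t+1) hx hd, mul_one]
      · rw [Q_succ, dInd_ne hd]
        simp only [Nat.sub_zero]
        have iu := ih n (up x) hx.up
        have iv := ih n (rt x) hx.rt
        have hq1x : (0:ℝ) ≤ Q β r (t+1) 1 x := Q_nonneg hr (t+1) 1 x
        calc urnStep β r x (up x) * Q β r t (n + 1) (up x) +
            urnStep β r x (rt x) * Q β r t (n + 1) (rt x)
            ≤ urnStep β r x (up x) * (FF r t ^ n * Q β r t 1 (up x)) +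
              urnStep β r x (rt x) * (FF r t ^ n * Q β r t 1 (rt x)) := by
              have := mul_le_mul_of_nonneg_left iu h1
              have := mul_le_mul_of_nonneg_left iv h2
              linarith
          _ = FF r t ^ n * (urnStep β r x (up x) * Q β r t 1 (up x) +
              urnStep β r x (rt x) * Q β r t 1 (rt x)) := by ring
          _ = FF r t ^ n * Q β r (t + 1) 1 x := by
              rw [Q_succ, dInd_ne hd]
          _ ≤ FF r (t + 1) ^ n * Q β r (t + 1) 1 x := by
              exact mul_le_mul_of_nonneg_right (pow_le_pow_left₀ hFt hFmono n) hq1x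

end chain

section lowerchain
variable (hr : 1 ≤ r)
include hr

/-- translation invariance of the feedback-free chain -/
lemma Q_trans : ∀ t n (x y : ℕ × ℕ), x.1 + y.2 = y.1 + x.2 → Q 0 r t n x = Q 0 r t n y := by
  intro t
  induction t with
  | zero =>
      intro n x y h
      rw [Q_zero_horizon, Q_zero_horizon]
      have : dInd x = dInd y := by unfold dInd; split_ifs <;> omega
      rw [this]
  | succ t ih =>
      intro n x y h
      rw [Q_succ, Q_succ, urnStep_zero_up hr, urnStep_zero_rt hr,
        urnStep_zero_up hr, urnStep_zero_rt hr]
      have hdd : dInd x = dInd y := by unfold dInd; split_ifs <;> omega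
      rw [hdd, ih (n - dInd y) (up x) (up y) (by simp [up]; omega),
        ih (n - dInd y) (rt x) (rt y) (by simp [rt]; omega)]

/-- splitting at the first tie (lower bound, feedback-free chain) -/
lemma Q_split (s n : ℕ) : ∀ t x, Pos x →
    Q 0 r t 1 x * Q 0 r s (n + 1) (1,1) ≤ Q 0 r (t + s) (n + 1) x := by
  have hD0 : 0 ≤ Q 0 r s (n + 1) (1,1) := Q_nonneg hr s (n+1) (1,1)
  intro t
  induction t with
  | zero =>
      intro x hx
      rw [Q_zero_horizon]
      by_cases hd : x.1 = x.2
      · rw [dInd_diag hd]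
        simp only [le_refl, if_pos, one_mul, Nat.zero_add]
        rw [Q_trans hr s (n+1) (1,1) x (by show 1 + x.2 = x.1 + 1; omega)]
      · rw [dInd_ne hd]
        simp only [show ¬ (1 ≤ 0) by omega, if_false, zero_mul, zero_add]
        exact Q_nonneg hr s (n+1) x
  | succ t ih =>
      intro x hx
      by_cases hd : x.1 = x.2
      · rw [Q_diag_one (le_refl 0) hr (t+1) hx hd, one_mul]
        have e1 : Q 0 r s (n+1) (1,1) = Q 0 r s (n+1) x :=
          Q_trans hr s (n+1) (1,1) x (by show 1 + x.2 = x.1 + 1; omega)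
        rw [e1]
        have : Q 0 r s (n+1) x ≤ Q 0 r (s + (t+1)) (n+1) x :=
          Q_mono_t' (le_refl 0) hr (t+1) s (n+1) x hx
        rwa [add_comm s (t+1)] at this
      · have e : (t + 1 + s) = (t + s) + 1 := by omega
        rw [e, Q_succ, Q_succ, dInd_ne hd]
        simp only [Nat.sub_zero]
        have iu := ih (up x) hx.up
        have iv := ih (rt x) hx.rt
        have h1 := urnStep_nonneg (β := (0:ℝ)) hr x (up x)
        have h2 := urnStep_nonneg (β := (0:ℝ)) hr x (rt x)
        have := mul_le_mul_of_nonneg_left iu h1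
        have := mul_le_mul_of_nonneg_left iv h2
        nlinarith

/-- iterated returns: `FF r s ^ n` bounds below the probability of `n` further ties. -/
lemma D_chain (s : ℕ) : ∀ n, FF r s ^ n ≤ Q 0 r ((s + 1) * n) (n + 1) (1,1) := by
  intro n
  induction n with
  | zero =>
      simp only [pow_zero, Nat.mul_zero]
      rw [Q_diag_one (le_refl 0) hr 0 ⟨one_pos, one_pos⟩ rfl]
  | succ n ih =>
      have hu : (s + 1) * (n + 1) = ((s + 1) * n + s) + 1 := by ring
      rw [hu, Q_succ, dInd_diag (rfl : ((1:ℕ),(1:ℕ)).1 = ((1:ℕ),(1:ℕ)).2)]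
      simp only [Nat.add_sub_cancel]
      rw [urnStep_zero_up hr, urnStep_zero_rt hr]
      have hA : gW (aa r) s 1 * Q 0 r ((s+1)*n) (n + 1) (1,1)
          ≤ Q 0 r (s + (s+1)*n) (n + 1) (up (1,1)) := by
        have := Q_split hr ((s+1)*n) n s (up (1,1)) ⟨by norm_num [up], by norm_num [up]⟩
        rwa [Q0_eq_GG hr s (up (1,1)) ⟨by norm_num [up], by norm_num [up]⟩,
          GG_left (by norm_num [up]), show (up ((1:ℕ),(1:ℕ))).1 - (up ((1:ℕ),(1:ℕ))).2 = 1 by norm_num [up]] at this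
      have hB : gW (bb r) s 1 * Q 0 r ((s+1)*n) (n + 1) (1,1)
          ≤ Q 0 r (s + (s+1)*n) (n + 1) (rt (1,1)) := by
        have := Q_split hr ((s+1)*n) n s (rt (1,1)) ⟨by norm_num [rt], by norm_num [rt]⟩
        rwa [Q0_eq_GG hr s (rt (1,1)) ⟨by norm_num [rt], by norm_num [rt]⟩,
          GG_right (by norm_num [rt]), show (rt ((1:ℕ),(1:ℕ))).2 - (rt ((1:ℕ),(1:ℕ))).1 = 1 by norm_num [rt]] at this
      have e : (s + 1) * n + s = s + (s + 1) * n := by ring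
      rw [e]
      have hb0 := bb_nonneg hr
      have ha0 := aa_nonneg hr
      have hF0 := FF_nonneg hr s
      have hihm : FF r s ^ (n + 1) ≤ FF r s * Q 0 r ((s+1)*n) (n + 1) (1,1) := by
        have := mul_le_mul_of_nonneg_left ih hF0
        calc FF r s ^ (n+1) = FF r s * FF r s ^ n := by ring
          _ ≤ FF r s * Q 0 r ((s+1)*n) (n + 1) (1,1) := this
      calc FF r s ^ (n + 1) ≤ FF r s * Q 0 r ((s+1)*n) (n + 1) (1,1) := hihm
        _ = bb r * (gW (aa r) s 1 * Q 0 r ((s+1)*n) (n + 1) (1,1)) +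
            aa r * (gW (bb r) s 1 * Q 0 r ((s+1)*n) (n + 1) (1,1)) := by unfold FF; ring
        _ ≤ r / (1 + r) * Q 0 r (s + (s+1)*n) (n + 1) (up (1,1)) +
            1 / (1 + r) * Q 0 r (s + (s+1)*n) (n + 1) (rt (1,1)) := by
            have := mul_le_mul_of_nonneg_left hA hb0
            have := mul_le_mul_of_nonneg_left hB ha0
            have e1 : r / (1 + r) = bb r := rfl
            have e2 : (1:ℝ) / (1 + r) = aa r := rfl
            rw [e1, e2]
            linarith

end lowerchain

/-- the final per-horizon comparison inequality -/
lemma Q_compare (hβ : 0 ≤ β) (hr : 1 ≤ r) {x₀ : ℕ × ℕ} (hx : Pos x₀) (k n : ℕ) :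
    Q β r k (n + 1) x₀ ≤ Q 0 r (k + (k + 1) * n) (n + 1) x₀ := by
  have h1 : Q β r k (n + 1) x₀ ≤ FF r k ^ n * Q β r k 1 x₀ :=
    Q_renewal_upper hβ hr k n x₀ hx
  have h2 : Q β r k 1 x₀ ≤ Q 0 r k 1 x₀ := by
    calc Q β r k 1 x₀ ≤ GG r k x₀ := Q_le_GG hβ hr k x₀ hx
      _ = Q 0 r k 1 x₀ := (Q0_eq_GG hr k x₀ hx).symm
  have hF : (0:ℝ) ≤ FF r k ^ n := pow_nonneg (FF_nonneg hr k) n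
  have h3 : FF r k ^ n * Q β r k 1 x₀ ≤ Q 0 r k 1 x₀ * FF r k ^ n := by
    rw [mul_comm (Q 0 r k 1 x₀)]
    exact mul_le_mul_of_nonneg_left h2 hF
  have h4 : Q 0 r k 1 x₀ * FF r k ^ n ≤ Q 0 r (k + (k + 1) * n) (n + 1) x₀ := by
    have hq0 : 0 ≤ Q 0 r k 1 x₀ := Q_nonneg hr k 1 x₀
    have hD := D_chain hr k n
    calc Q 0 r k 1 x₀ * FF r k ^ n ≤ Q 0 r k 1 x₀ * Q 0 r ((k+1)*n) (n + 1) (1,1) :=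
          mul_le_mul_of_nonneg_left hD hq0
      _ ≤ Q 0 r (k + (k + 1) * n) (n + 1) x₀ := Q_split hr ((k+1)*n) n k x₀ hx
  linarith

end UrnAux

namespace UrnAux

open scoped ENNReal

/-- number of ties along a finite trajectory -/
def ties (t : ℕ) (v : Fin (t + 1) → ℕ × ℕ) : ℕ :=
  (Finset.univ.filter (fun j => (v j).1 = (v j).2)).card

/-- weight of a finite trajectory -/
def wcyl (β r : ℝ) (t : ℕ) (v : Fin (t + 1) → ℕ × ℕ) : ℝ≥0∞ :=
  ∏ s : Fin t, ENNReal.ofReal (urnStep β r (v s.castSucc) (v s.succ))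

lemma ties_zero (v : Fin 1 → ℕ × ℕ) : ties 0 v = dInd (v 0) := by
  rw [ties, Finset.card_filter, Fin.sum_univ_succ]
  simp [dInd]

lemma ties_succ (t : ℕ) (y : ℕ × ℕ) (w : Fin (t + 1) → ℕ × ℕ) :
    ties (t + 1) (Fin.cons y w) = dInd y + ties t w := by
  rw [ties, Finset.card_filter, Fin.sum_univ_succ, ties, Finset.card_filter]
  simp [dInd, Fin.cons_succ, Fin.cons_zero]

lemma wcyl_zero (β r : ℝ) (v : Fin 1 → ℕ × ℕ) : wcyl β r 0 v = 1 := by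
  simp [wcyl]

lemma wcyl_succ (β r : ℝ) (t : ℕ) (y : ℕ × ℕ) (w : Fin (t + 1) → ℕ × ℕ) :
    wcyl β r (t + 1) (Fin.cons y w) =
      ENNReal.ofReal (urnStep β r y (w 0)) * wcyl β r t w := by
  rw [wcyl, Fin.prod_univ_succ, wcyl]
  congr 1

/-- the total weight of trajectories from `x` with at least `n` ties -/
def bigSum (β r : ℝ) (t n : ℕ) (x : ℕ × ℕ) : ℝ≥0∞ :=
  ∑' v : Fin (t + 1) → ℕ × ℕ, if v 0 = x ∧ n ≤ ties t v then wcyl β r t v else 0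

lemma bigSum_eq {β r : ℝ} (hβ : 0 ≤ β) (hr : 1 ≤ r) :
    ∀ t n x, Pos x → bigSum β r t n x = ENNReal.ofReal (Q β r t n x) := by
  intro t
  induction t with
  | zero =>
      intro n x hx
      rw [bigSum, ← Equiv.tsum_eq (Equiv.funUnique (Fin 1) (ℕ × ℕ)).symm]
      have e1 : ∀ y : ℕ × ℕ, ((Equiv.funUnique (Fin 1) (ℕ × ℕ)).symm y : Fin 1 → ℕ × ℕ)
          = fun _ => y := fun y => rfl
      simp only [e1]
      rw [tsum_eq_single x]
      · simp only [ties_zero, wcyl_zero, Q_zero_horizon]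
        split_ifs with h1 h2 h3 <;> simp_all
      · intro y hy
        rw [if_neg]
        intro hc
        exact hy hc.1
  | succ t ih =>
      intro n x hx
      rw [bigSum, ← Equiv.tsum_eq (Fin.consEquiv (fun _ : Fin (t + 2) => ℕ × ℕ)),
        ENNReal.tsum_prod']
      have e1 : ∀ (y : ℕ × ℕ) (w : Fin (t + 1) → ℕ × ℕ),
          (Fin.consEquiv (fun _ : Fin (t + 2) => ℕ × ℕ)) (y, w) = Fin.cons y w :=
        fun y w => rfl
      simp only [e1]
      rw [tsum_eq_single x]
      swap
      · intro y hy
        rw [ENNReal.tsum_eq_zero]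
        intro w
        rw [if_neg]
        intro hc
        exact hy (by simpa [Fin.cons_zero] using hc.1)
      · -- main term
        have hcond : ∀ w : Fin (t + 1) → ℕ × ℕ,
            ((Fin.cons x w : Fin (t + 2) → ℕ × ℕ) 0 = x ∧ n ≤ ties (t + 1) (Fin.cons x w))
              = (n - dInd x ≤ ties t w) := by
          intro w
          rw [ties_succ]
          simp only [Fin.cons_zero, true_and, eq_self_iff_true]
          exact propext (by omega)
        simp only [hcond]
        set m := n - dInd x with hm
        have hstep : ∀ w : Fin (t + 1) → ℕ × ℕ,
            (if m ≤ ties t w then wcyl β r (t+1) (Fin.cons x w) else 0)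
              = ∑' z : ℕ × ℕ, if z = w 0 then
                  (if m ≤ ties t w then wcyl β r (t+1) (Fin.cons x w) else 0) else 0 :=
          fun w => (tsum_ite_eq (w 0) (fun _ => _)).symm
        calc (∑' w : Fin (t + 1) → ℕ × ℕ,
                if m ≤ ties t w then wcyl β r (t+1) (Fin.cons x w) else 0)
            = ∑' (w : Fin (t + 1) → ℕ × ℕ) (z : ℕ × ℕ), if z = w 0 then
                (if m ≤ ties t w then wcyl β r (t+1) (Fin.cons x w) else 0) else 0 := by
              exact tsum_congr hstep
          _ = ∑' (z : ℕ × ℕ) (w : Fin (t + 1) → ℕ × ℕ), if z = w 0 then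
                (if m ≤ ties t w then wcyl β r (t+1) (Fin.cons x w) else 0) else 0 :=
              ENNReal.tsum_comm
          _ = ∑' z : ℕ × ℕ, ENNReal.ofReal (urnStep β r x z) *
                (∑' w : Fin (t + 1) → ℕ × ℕ,
                  if w 0 = z ∧ m ≤ ties t w then wcyl β r t w else 0) := by
              apply tsum_congr
              intro z
              rw [← ENNReal.tsum_mul_left]
              apply tsum_congr
              intro w
              rw [wcyl_succ]
              by_cases h1 : z = w 0
              · subst h1
                by_cases h2 : m ≤ ties t w
                · rw [if_pos rfl, if_pos h2, if_pos ⟨rfl, h2⟩]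
                · rw [if_pos rfl, if_neg h2, if_neg (by tauto), mul_zero]
              · rw [if_neg h1, if_neg (by tauto), mul_zero]
          _ = ∑' z : ℕ × ℕ, ENNReal.ofReal (urnStep β r x z) * bigSum β r t m z := by
              apply tsum_congr; intro z; rw [bigSum]
          _ = ENNReal.ofReal (urnStep β r x (up x)) * bigSum β r t m (up x) +
              ENNReal.ofReal (urnStep β r x (rt x)) * bigSum β r t m (rt x) := by
              rw [tsum_eq_sum (s := {up x, rt x})]
              · exact Finset.sum_pair (up_ne_rt x)
              · intro z hz
                simp only [Finset.mem_insert, Finset.mem_singleton] at hz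
                push_neg at hz
                rw [urnStep_eq_zero hz.1 hz.2, ENNReal.ofReal_zero, zero_mul]
          _ = ENNReal.ofReal (Q β r (t + 1) n x) := by
              rw [ih m (up x) hx.up, ih m (rt x) hx.rt, Q_succ]
              rw [← ENNReal.ofReal_mul (urnStep_nonneg hr x (up x)),
                ← ENNReal.ofReal_mul (urnStep_nonneg hr x (rt x)),
                ← ENNReal.ofReal_add
                  (mul_nonneg (urnStep_nonneg hr x (up x)) (Q_nonneg hr t m (up x)))
                  (mul_nonneg (urnStep_nonneg hr x (rt x)) (Q_nonneg hr t m (rt x)))]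

end UrnAux

namespace UrnAux

open MeasureTheory

/-- restriction of a trajectory to its first `t+1` values -/
def res (t : ℕ) (ω : ℕ → ℕ × ℕ) : Fin (t + 1) → ℕ × ℕ := fun i => ω i

lemma measurable_res (t : ℕ) : Measurable (res t) :=
  measurable_pi_lambda _ (fun i => measurable_pi_apply _)

lemma measurableSet_res_preimage (t : ℕ) (A : Set (Fin (t + 1) → ℕ × ℕ)) :
    MeasurableSet (res t ⁻¹' A) :=
  (measurable_res t) ((Set.to_countable A).measurableSet)

section meas
variable {β r : ℝ} {x₀ : ℕ × ℕ} {μ : Measure (ℕ → ℕ × ℕ)}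

lemma start_null (hμ : IsUrnProcess μ β r x₀) : μ {ω | ω 0 ≠ x₀} = 0 := by
  haveI := hμ.1
  have h := hμ.2 0 (fun _ => x₀) rfl
  simp only [Finset.range_zero, Finset.prod_empty] at h
  have hset : {ω : ℕ → ℕ × ℕ | ∀ t ≤ 0, ω t = (fun _ => x₀) t} = {ω | ω 0 = x₀} := by
    ext ω
    simp only [Set.mem_setOf_eq]
    constructor
    · intro hω; exact hω 0 le_rfl
    · intro hω t ht
      have : t = 0 := Nat.le_zero.mp ht
      rw [this]; exact hω
  rw [hset] at h
  have hmeas : MeasurableSet {ω : ℕ → ℕ × ℕ | ω 0 = x₀} := by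
    have he : {ω : ℕ → ℕ × ℕ | ω 0 = x₀} = (fun ω : ℕ → ℕ × ℕ => ω 0) ⁻¹' {x₀} := rfl
    rw [he]; exact (measurable_pi_apply 0) (measurableSet_singleton _)
  have h1 : μ {ω | ω 0 = x₀} = 1 := by
    have hne : μ {ω : ℕ → ℕ × ℕ | ω 0 = x₀} ≠ ⊤ := measure_ne_top μ _
    rw [← ENNReal.ofReal_toReal hne, h, ENNReal.ofReal_one]
  have hc := measure_compl hmeas (measure_ne_top μ _)
  have hcompl : {ω : ℕ → ℕ × ℕ | ω 0 ≠ x₀} = {ω : ℕ → ℕ × ℕ | ω 0 = x₀}ᶜ := rfl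
  rw [hcompl, hc, h1, measure_univ, tsub_self]

lemma cyl_measure (hμ : IsUrnProcess μ β r x₀) (hr : 1 ≤ r) (t : ℕ)
    (v : Fin (t + 1) → ℕ × ℕ) (hv : v 0 = x₀) :
    μ (res t ⁻¹' {v}) = wcyl β r t v := by
  classical
  haveI := hμ.1
  set path : ℕ → ℕ × ℕ := fun s => if h : s < t + 1 then v ⟨s, h⟩ else x₀ with hpath
  have hpath0 : path 0 = x₀ := by
    rw [hpath]; simp only [dif_pos (Nat.succ_pos t)]
    exact hv
  have h := hμ.2 t path hpath0
  have hset : {ω : ℕ → ℕ × ℕ | ∀ s ≤ t, ω s = path s} = res t ⁻¹' {v} := by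
    ext ω
    simp only [Set.mem_setOf_eq, Set.mem_preimage, Set.mem_singleton_iff]
    constructor
    · intro hω
      funext i
      have hi := hω i (Nat.lt_succ_iff.mp i.isLt)
      rw [res]
      rw [hi, hpath]
      simp only [dif_pos i.isLt]
    · intro hω s hs
      have hlt : s < t + 1 := Nat.lt_succ_of_le hs
      have : ω s = v ⟨s, hlt⟩ := by rw [← hω]; rfl
      rw [this, hpath]
      simp only [dif_pos hlt]
  have hprod : ∏ s ∈ Finset.range t, urnStep β r (path s) (path (s + 1))
      = ∏ s : Fin t, urnStep β r (v s.castSucc) (v s.succ) := by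
    rw [← Fin.prod_univ_eq_prod_range (fun s => urnStep β r (path s) (path (s + 1))) t]
    apply Finset.prod_congr rfl
    intro s _
    have h1 : path s.val = v s.castSucc := by
      rw [hpath]
      simp only [dif_pos (Nat.lt_succ_of_lt s.isLt)]
      congr 1
    have h2 : path (s.val + 1) = v s.succ := by
      rw [hpath]
      simp only [dif_pos (Nat.succ_lt_succ s.isLt)]
      congr 1
    rw [h1, h2]
  rw [hset] at h
  have hne : μ (res t ⁻¹' {v}) ≠ ⊤ := measure_ne_top μ _
  rw [← ENNReal.ofReal_toReal hne, h, hprod,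
    ENNReal.ofReal_prod_of_nonneg (fun i _ => urnStep_nonneg hr _ _)]
  rfl

lemma cyl_null (hμ : IsUrnProcess μ β r x₀) (t : ℕ)
    (v : Fin (t + 1) → ℕ × ℕ) (hv : v 0 ≠ x₀) :
    μ (res t ⁻¹' {v}) = 0 := by
  apply measure_mono_null _ (start_null hμ)
  intro ω hω
  simp only [Set.mem_preimage, Set.mem_singleton_iff] at hω
  have : ω 0 = v 0 := by rw [← hω]; rfl
  simp only [Set.mem_setOf_eq, this]
  exact hv

lemma event_measure (t : ℕ) (A : Set (Fin (t + 1) → ℕ × ℕ)) :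
    μ (res t ⁻¹' A) = ∑' v : A, μ (res t ⁻¹' {(v : Fin (t + 1) → ℕ × ℕ)}) := by
  have hun : res t ⁻¹' A = ⋃ v : A, res t ⁻¹' {(v : Fin (t + 1) → ℕ × ℕ)} := by
    ext ω
    simp only [Set.mem_preimage, Set.mem_iUnion, Set.mem_singleton_iff]
    constructor
    · intro h; exact ⟨⟨res t ω, h⟩, rfl⟩
    · rintro ⟨v, hv⟩; rw [hv]; exact v.2
  rw [hun, measure_iUnion]
  · intro v w hvw
    simp only [Function.onFun, Set.disjoint_left]
    intro ω h1 h2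
    simp only [Set.mem_preimage, Set.mem_singleton_iff] at h1 h2
    exact hvw (Subtype.ext (h1 ▸ h2 ▸ rfl))
  · intro v; exact measurableSet_res_preimage t _

lemma numTies_eq (ω : ℕ → ℕ × ℕ) (t : ℕ) : numTiesUpTo ω t = ties t (res t ω) := by
  rw [numTiesUpTo, ties, Finset.card_filter, Finset.card_filter,
    ← Fin.sum_univ_eq_sum_range (fun j => if (ω j).1 = (ω j).2 then 1 else 0) (t + 1)]
  rfl

lemma measure_Et (hμ : IsUrnProcess μ β r x₀) (hβ : 0 ≤ β) (hr : 1 ≤ r)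
    (hx : Pos x₀) (t n : ℕ) :
    μ {ω | n ≤ numTiesUpTo ω t} = ENNReal.ofReal (Q β r t n x₀) := by
  classical
  have hset : {ω : ℕ → ℕ × ℕ | n ≤ numTiesUpTo ω t}
      = res t ⁻¹' {v | n ≤ ties t v} := by
    ext ω
    simp only [Set.mem_setOf_eq, Set.mem_preimage, numTies_eq]
  rw [hset, event_measure]
  have hterm : ∀ v : {v : Fin (t + 1) → ℕ × ℕ | n ≤ ties t v},
      μ (res t ⁻¹' {(v : Fin (t + 1) → ℕ × ℕ)})
        = (if (v : Fin (t + 1) → ℕ × ℕ) 0 = x₀ then wcyl β r t v else 0) := by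
    intro v
    by_cases hv : (v : Fin (t + 1) → ℕ × ℕ) 0 = x₀
    · rw [if_pos hv]; exact cyl_measure hμ hr t _ hv
    · rw [if_neg hv]; exact cyl_null hμ t _ hv
  rw [tsum_congr hterm,
    tsum_subtype {v : Fin (t + 1) → ℕ × ℕ | n ≤ ties t v}
      (fun v => if v 0 = x₀ then wcyl β r t v else 0)]
  have hind : ∀ v : Fin (t + 1) → ℕ × ℕ,
      Set.indicator {v : Fin (t + 1) → ℕ × ℕ | n ≤ ties t v}
        (fun v => if v 0 = x₀ then wcyl β r t v else 0) v
      = (if v 0 = x₀ ∧ n ≤ ties t v then wcyl β r t v else 0) := by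
    intro v
    rw [Set.indicator_apply]
    by_cases h1 : n ≤ ties t v <;> by_cases h2 : v 0 = x₀ <;>
      simp [h1, h2, Set.mem_setOf_eq]
  rw [tsum_congr hind]
  exact bigSum_eq hβ hr t n x₀ hx

lemma numTies_mono (ω : ℕ → ℕ × ℕ) : Monotone (numTiesUpTo ω) := by
  apply monotone_nat_of_le_succ
  intro t
  apply Finset.card_le_card
  apply Finset.filter_subset_filter
  exact Finset.range_subset_range.mpr (Nat.le_succ _)

lemma encard_iff (ω : ℕ → ℕ × ℕ) (n : ℕ) :
    ((n : ℕ∞) ≤ intensity ω) ↔ ∃ t, n ≤ numTiesUpTo ω t := by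
  rw [intensity]
  constructor
  · intro h
    obtain ⟨T, hTsub, hTe⟩ := Set.exists_subset_encard_eq h
    have hfin : T.Finite := Set.finite_of_encard_eq_coe hTe
    have hcard : hfin.toFinset.card = n := by
      have h1 : (↑hfin.toFinset : Set ℕ) = T := hfin.coe_toFinset
      have := Set.encard_coe_eq_coe_finsetCard hfin.toFinset
      rw [h1, hTe] at this
      exact_mod_cast this.symm
    obtain ⟨m, hm⟩ := hfin.toFinset.exists_nat_subset_range
    refine ⟨m, ?_⟩
    rw [← hcard, numTiesUpTo]
    apply Finset.card_le_card
    intro a ha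
    rw [Finset.mem_filter]
    constructor
    · exact Finset.range_subset_range.mpr (Nat.le_succ m) (hm ha)
    · have : a ∈ T := hfin.mem_toFinset.mp ha
      exact hTsub this
  · rintro ⟨t, ht⟩
    calc (n : ℕ∞) ≤ (numTiesUpTo ω t : ℕ∞) := by exact_mod_cast ht
      _ = (↑((Finset.range (t + 1)).filter (fun j => (ω j).1 = (ω j).2)) : Set ℕ).encard := by
          rw [numTiesUpTo, Set.encard_coe_eq_coe_finsetCard]
      _ ≤ {s : ℕ | (ω s).1 = (ω s).2}.encard := by
          apply Set.encard_mono
          intro a ha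
          simp only [Finset.coe_filter, Set.mem_setOf_eq, Finset.mem_range] at ha
          exact ha.2

lemma measure_intensity (hμ : IsUrnProcess μ β r x₀) (hβ : 0 ≤ β) (hr : 1 ≤ r)
    (hx : Pos x₀) (n : ℕ) :
    μ {ω | (n : ℕ∞) ≤ intensity ω} = ⨆ t, ENNReal.ofReal (Q β r t n x₀) := by
  have hset : {ω : ℕ → ℕ × ℕ | (n : ℕ∞) ≤ intensity ω}
      = ⋃ t, {ω : ℕ → ℕ × ℕ | n ≤ numTiesUpTo ω t} := by
    ext ω
    simp only [Set.mem_setOf_eq, Set.mem_iUnion, encard_iff]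
  have hmono : Monotone (fun t => {ω : ℕ → ℕ × ℕ | n ≤ numTiesUpTo ω t}) := by
    intro s t hst ω hω
    exact le_trans hω (numTies_mono ω hst)
  rw [hset, Directed.measure_iUnion (hmono.directed_le)]
  apply iSup_congr
  intro t
  exact measure_Et hμ hβ hr hx t n

end meas

end UrnAux


/-- For any `β ≥ 0` and `r ≥ 1`, the intensity satisfies
`N(β,r,x₀) ⪯ N(0,r,x₀)`: feedback, regardless of its strength, does not increase the
number of ties compared to the feedback-free random walk. -/
theorem stmt_4 (β r : ℝ) (hβ : 0 ≤ β) (hr : 1 ≤ r)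
    (x₀ : ℕ × ℕ) (hx₁ : 0 < x₀.1) (hx₂ : 0 < x₀.2)
    (μ μ₀ : Measure (ℕ → ℕ × ℕ))
    (hμ : IsUrnProcess μ β r x₀) (hμ₀ : IsUrnProcess μ₀ 0 r x₀) :
    ∀ n : ℕ, μ {ω | (n : ℕ∞) ≤ intensity ω} ≤ μ₀ {ω | (n : ℕ∞) ≤ intensity ω} := by
  intro n
  have hx : UrnAux.Pos x₀ := ⟨hx₁, hx₂⟩
  cases n with
  | zero =>
      haveI := hμ.1
      haveI := hμ₀.1
      have h1 : {ω : ℕ → ℕ × ℕ | ((0 : ℕ) : ℕ∞) ≤ intensity ω} = Set.univ := by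
        ext ω; simp
      rw [h1, measure_univ, measure_univ]
  | succ n =>
      rw [UrnAux.measure_intensity hμ hβ hr hx (n + 1),
        UrnAux.measure_intensity hμ₀ (le_refl (0:ℝ)) hr hx (n + 1)]
      apply iSup_le
      intro k
      calc ENNReal.ofReal (UrnAux.Q β r k (n + 1) x₀)
          ≤ ENNReal.ofReal (UrnAux.Q 0 r (k + (k + 1) * n) (n + 1) x₀) :=
            ENNReal.ofReal_le_ofReal (UrnAux.Q_compare hβ hr hx k n)
        _ ≤ ⨆ t, ENNReal.ofReal (UrnAux.Q 0 r t (n + 1) x₀) :=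
            le_iSup (fun t => ENNReal.ofReal (UrnAux.Q 0 r t (n + 1) x₀)) (k + (k + 1) * n)
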